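/- Let n ≥ 2 and S be an admissible peak set containing both 2 and n−1. Then for any σ, ρ ∈ P(S;n), the ℓ∞ distance satisfies d_ℓ(σ,ρ) ≤ n−2, and this bound is attained; i.e., the maximum ℓ∞ distance on P(S;n) is n−2. -/
import Mathlib


/-- Hamming distance on permutations of `Fin n`. -/
def dH (n : ℕ) (σ ρ : Equiv.Perm (Fin n)) : ℕ :=
  (Finset.univ.filter (fun i => σ i ≠ ρ i)).card

/-- ℓ∞ distance on permutations of `Fin n`. -/
def dL (n : ℕ) (σ ρ : Equiv.Perm (Fin n)) : ℕ :=
  Finset.univ.sup (fun i => (((σ i : ℕ) : ℤ) - ((ρ i : ℕ) : ℤ)).natAbs)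

/-- Kendall-Tau distance: number of deranged pairs. -/
def dK (n : ℕ) (σ ρ : Equiv.Perm (Fin n)) : ℕ :=
  (Finset.univ.filter (fun p : Fin n × Fin n =>
    p.1 < p.2 ∧ (((σ p.1 : ℕ) : ℤ) - ((σ p.2 : ℕ) : ℤ)) *
      (((ρ p.1 : ℕ) : ℤ) - ((ρ p.2 : ℕ) : ℤ)) < 0)).card

/-- `τ` is an adjacent transposition `(i, i+1)`. -/
def IsAdjTrans (n : ℕ) (τ : Equiv.Perm (Fin n)) : Prop :=
  ∃ (i : ℕ) (h : i + 1 < n), τ = Equiv.swap ⟨i, Nat.lt_of_succ_lt h⟩ ⟨i + 1, h⟩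

/-- Minimal number of adjacent transpositions transforming `σ` into `ρ`
(acting by left multiplication). -/
noncomputable def dK' (n : ℕ) (σ ρ : Equiv.Perm (Fin n)) : ℕ :=
  sInf {m | ∃ L : List (Equiv.Perm (Fin n)), L.length = m ∧
    (∀ τ ∈ L, IsAdjTrans n τ) ∧ L.prod * σ = ρ}

/-- The peak set of `σ`, with 1-based positions: `j ∈ {2, …, n-1}` is a peak if
`σ_{j-1} < σ_j > σ_{j+1}` in one-line notation (so 0-based indices `j-2, j-1, j`). -/
def peaks (n : ℕ) (σ : Equiv.Perm (Fin n)) : Finset ℕ :=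
  (Finset.Icc 2 (n - 1)).filter (fun j =>
    ∃ (h1 : j - 2 < n) (h2 : j - 1 < n) (h3 : j < n),
      σ ⟨j - 2, h1⟩ < σ ⟨j - 1, h2⟩ ∧ σ ⟨j, h3⟩ < σ ⟨j - 1, h2⟩)

lemma peaks_elim {n j : ℕ} {σ : Equiv.Perm (Fin n)} (h : j ∈ peaks n σ) :
    2 ≤ j ∧ j ≤ n - 1 ∧ ∃ (h1 : j - 2 < n) (h2 : j - 1 < n) (h3 : j < n),
      σ ⟨j-2,h1⟩ < σ ⟨j-1,h2⟩ ∧ σ ⟨j,h3⟩ < σ ⟨j-1,h2⟩ := by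
  simp only [peaks, Finset.mem_filter, Finset.mem_Icc] at h
  exact ⟨h.1.1, h.1.2, h.2⟩

lemma peaks_intro {n j : ℕ} {σ : Equiv.Perm (Fin n)} (hj2 : 2 ≤ j) (hjn : j ≤ n - 1)
    (h3 : j < n)
    (ha : σ ⟨j-2, by omega⟩ < σ ⟨j-1, by omega⟩) (hb : σ ⟨j, h3⟩ < σ ⟨j-1, by omega⟩) :
    j ∈ peaks n σ := by
  simp only [peaks, Finset.mem_filter, Finset.mem_Icc]
  exact ⟨⟨hj2, hjn⟩, by omega, by omega, h3, ha, hb⟩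

lemma lt_flip {α : Type*} [LinearOrder α] {a b c d : α} (hab : a ≠ b) (hcd : c ≠ d)
    (h : a < b ↔ c < d) : b < a ↔ d < c := by
  constructor
  · intro hba
    rcases hcd.lt_or_gt with h1 | h1
    · exact absurd (h.mpr h1) (asymm hba)
    · exact h1
  · intro hdc
    rcases hab.lt_or_gt with h1 | h1
    · exact absurd (h.mp h1) (asymm hdc)
    · exact h1

lemma peaks_sub (n : ℕ) (σ' σ : Equiv.Perm (Fin n))
    (h : ∀ i j : Fin n, (j : ℕ) = (i : ℕ) + 1 → (σ' i < σ' j ↔ σ i < σ j)) :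
    peaks n σ' ⊆ peaks n σ := by
  intro k hk
  obtain ⟨hk2, hkn, h1, h2, h3, ha, hb⟩ := peaks_elim hk
  refine peaks_intro hk2 hkn h3 ?_ ?_
  · exact (h ⟨k-2, h1⟩ ⟨k-1, h2⟩ (by simp; omega)).mp ha
  · have hne1 : σ' ⟨k-1, h2⟩ ≠ σ' ⟨k, h3⟩ := by
      intro e
      have := σ'.injective e
      rw [Fin.mk.injEq] at this
      omega
    have hne2 : σ ⟨k-1, h2⟩ ≠ σ ⟨k, h3⟩ := by
      intro e
      have := σ.injective e
      rw [Fin.mk.injEq] at this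
      omega
    exact (lt_flip hne1 hne2 (h ⟨k-1, h2⟩ ⟨k, h3⟩ (by simp; omega))).mp hb

lemma peaks_congr (n : ℕ) (σ' σ : Equiv.Perm (Fin n))
    (h : ∀ i j : Fin n, (j : ℕ) = (i : ℕ) + 1 → (σ' i < σ' j ↔ σ i < σ j)) :
    peaks n σ' = peaks n σ :=
  le_antisymm (peaks_sub n σ' σ h)
    (peaks_sub n σ σ' (fun i j hj => (h i j hj).symm))

lemma max_at_peak (n : ℕ) (hn3 : 3 ≤ n) (S : Finset ℕ) (h2 : 2 ∈ S) (hn1 : n - 1 ∈ S)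
    (σ : Equiv.Perm (Fin n)) (hσ : peaks n σ = S) (i : Fin n) (hmax : (σ i : ℕ) = n - 1) :
    (i : ℕ) + 1 ∈ S := by
  rw [← hσ] at h2 hn1 ⊢
  obtain ⟨_, _, g1, g2, g3, p01, p21⟩ := peaks_elim h2
  obtain ⟨_, _, f1, f2, f3, q01, q21⟩ := peaks_elim hn1
  have hi0 : (i : ℕ) ≠ 0 := by
    intro e
    have : (⟨2-2, g1⟩ : Fin n) = i := Fin.ext (by simp; omega)
    rw [this] at p01
    rw [Fin.lt_def, hmax] at p01
    have := (σ ⟨2-1, g2⟩).isLt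
    omega
  have hin : (i : ℕ) ≠ n - 1 := by
    intro e
    have : (⟨n-1, f3⟩ : Fin n) = i := Fin.ext (by simp; omega)
    rw [this] at q21
    rw [Fin.lt_def, hmax] at q21
    have := (σ ⟨n-1-1, f2⟩).isLt
    omega
  have hilt := i.isLt
  have key : ∀ x : Fin n, x ≠ i → σ x < σ i := by
    intro x hx
    have h1 : σ x ≠ σ i := fun e => hx (σ.injective e)
    have h2 : (σ x : ℕ) ≠ (σ i : ℕ) := fun e => h1 (Fin.ext e)
    have := (σ x).isLt
    rw [Fin.lt_def, hmax]
    omega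
  have ei : (⟨(i:ℕ)+1-1, by omega⟩ : Fin n) = i := Fin.ext (by simp)
  refine peaks_intro (by omega) (by omega) (by omega) ?_ ?_
  · have := key ⟨(i:ℕ)+1-2, by omega⟩ (by intro e; simp only [Fin.ext_iff, Fin.val_mk] at e; omega)
    convert this using 2
  · have := key ⟨(i:ℕ)+1, by omega⟩ (by intro e; simp only [Fin.ext_iff, Fin.val_mk] at e; omega)
    convert this using 2

lemma min_not_peak (n : ℕ) (S : Finset ℕ)
    (σ : Equiv.Perm (Fin n)) (hσ : peaks n σ = S) (i : Fin n) (hmin : (σ i : ℕ) = 0) :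
    (i : ℕ) + 1 ∉ S := by
  rw [← hσ]
  intro hmem
  obtain ⟨hk2, hkn, h1, h2, h3, ha, hb⟩ := peaks_elim hmem
  have ei : (⟨(i:ℕ)+1-1, h2⟩ : Fin n) = i := Fin.ext (by simp)
  rw [ei] at ha
  rw [Fin.lt_def, hmin] at ha
  omega

lemma dL_le (n : ℕ) (hn3 : 3 ≤ n) (S : Finset ℕ) (h2 : 2 ∈ S) (hn1 : n - 1 ∈ S)
    (σ ρ : Equiv.Perm (Fin n)) (hσ : peaks n σ = S) (hρ : peaks n ρ = S) :
    dL n σ ρ ≤ n - 2 := by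
  apply Finset.sup_le
  intro i _
  by_contra hcon
  push_neg at hcon
  have hs := (σ i).isLt
  have hr := (ρ i).isLt
  have hcases : ((σ i : ℕ) = n-1 ∧ (ρ i : ℕ) = 0) ∨ ((σ i : ℕ) = 0 ∧ (ρ i : ℕ) = n-1) := by
    omega
  rcases hcases with ⟨ha, hb⟩ | ⟨ha, hb⟩
  · exact min_not_peak n S ρ hρ i hb (max_at_peak n hn3 S h2 hn1 σ hσ i ha)
  · exact min_not_peak n S σ hσ i ha (max_at_peak n hn3 S h2 hn1 ρ hρ i hb)

def gmap (a v : ℕ) : ℕ := if v = a then 0 else if v < a then v + 1 else v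

def hmap (n a b v : ℕ) : ℕ :=
  if v = a then n - 2 else if v = b then n - 1
  else (v - (if a < v then 1 else 0)) - (if b < v then 1 else 0)

lemma exists_attain (n : ℕ) (hn3 : 3 ≤ n) (τ : Equiv.Perm (Fin n)) (h2 : 2 ∈ peaks n τ) :
    ∃ σ ρ : Equiv.Perm (Fin n), peaks n σ = peaks n τ ∧ peaks n ρ = peaks n τ ∧
      (σ ⟨0, by omega⟩ : ℕ) = 0 ∧ (ρ ⟨0, by omega⟩ : ℕ) = n - 2 := by
  obtain ⟨_, _, g1, g2, g3, p01, p21⟩ := peaks_elim h2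
  obtain ⟨a, hA⟩ : ∃ a, (τ ⟨2-2, g1⟩ : ℕ) = a := ⟨_, rfl⟩
  obtain ⟨b, hB⟩ : ∃ b, (τ ⟨2-1, g2⟩ : ℕ) = b := ⟨_, rfl⟩
  obtain ⟨c, hC⟩ : ∃ c, (τ ⟨2, g3⟩ : ℕ) = c := ⟨_, rfl⟩
  have hab : a < b := by rw [← hA, ← hB]; exact p01
  have hcb : c < b := by rw [← hC, ← hB]; exact p21
  have han : a < n := by rw [← hA]; exact (τ ⟨2-2, g1⟩).isLt
  have hbn : b < n := by rw [← hB]; exact (τ ⟨2-1, g2⟩).isLt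
  have hcn : c < n := by rw [← hC]; exact (τ ⟨2, g3⟩).isLt
  -- σ construction
  have gbound : ∀ i : Fin n, gmap a (τ i : ℕ) < n := by
    intro i
    have := (τ i).isLt
    unfold gmap; split_ifs <;> omega
  have hinjσ : Function.Injective (fun i => (⟨gmap a (τ i : ℕ), gbound i⟩ : Fin n)) := by
    intro i j e
    rw [Fin.mk.injEq] at e
    have hvi := (τ i).isLt
    have hvj := (τ j).isLt
    have : ((τ i : ℕ)) = ((τ j : ℕ)) := by
      unfold gmap at e; split_ifs at e <;> omega
    exact τ.injective (Fin.ext this)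
  obtain ⟨σ, hσapp⟩ : ∃ σ : Equiv.Perm (Fin n), ∀ i, (σ i : ℕ) = gmap a (τ i : ℕ) :=
    ⟨Equiv.ofBijective _ (Finite.injective_iff_bijective.mp hinjσ), fun i => rfl⟩
  -- ρ construction
  have hbound : ∀ i : Fin n, hmap n a b (τ i : ℕ) < n := by
    intro i
    have := (τ i).isLt
    unfold hmap; split_ifs <;> omega
  have hinjρ : Function.Injective (fun i => (⟨hmap n a b (τ i : ℕ), hbound i⟩ : Fin n)) := by
    intro i j e
    rw [Fin.mk.injEq] at e
    have hvi := (τ i).isLt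
    have hvj := (τ j).isLt
    have : ((τ i : ℕ)) = ((τ j : ℕ)) := by
      unfold hmap at e; split_ifs at e <;> omega
    exact τ.injective (Fin.ext this)
  obtain ⟨ρ, hρapp⟩ : ∃ ρ : Equiv.Perm (Fin n), ∀ i, (ρ i : ℕ) = hmap n a b (τ i : ℕ) :=
    ⟨Equiv.ofBijective _ (Finite.injective_iff_bijective.mp hinjρ), fun i => rfl⟩
  -- position facts
  have pos_a : ∀ i : Fin n, (τ i : ℕ) = a → (i : ℕ) = 0 := by
    intro i hi
    have : τ i = τ ⟨2-2, g1⟩ := Fin.ext (by rw [hA]; exact hi)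
    have := τ.injective this
    simp only [Fin.ext_iff, Fin.val_mk] at this
    omega
  have pos_b : ∀ i : Fin n, (τ i : ℕ) = b → (i : ℕ) = 1 := by
    intro i hi
    have : τ i = τ ⟨2-1, g2⟩ := Fin.ext (by rw [hB]; exact hi)
    have := τ.injective this
    simp only [Fin.ext_iff, Fin.val_mk] at this
    omega
  have val1 : ∀ i : Fin n, (i : ℕ) = 1 → (τ i : ℕ) = b := by
    intro i hi
    have : i = ⟨2-1, g2⟩ := Fin.ext (by simp only [Fin.val_mk]; omega)
    rw [this, hB]
  have val2 : ∀ i : Fin n, (i : ℕ) = 2 → (τ i : ℕ) = c := by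
    intro i hi
    have : i = ⟨2, g3⟩ := Fin.ext (by simp only [Fin.val_mk]; omega)
    rw [this, hC]
  refine ⟨σ, ρ, ?_, ?_, ?_, ?_⟩
  · apply peaks_congr
    intro i j hj
    rw [Fin.lt_def, Fin.lt_def, hσapp, hσapp]
    have hvi := (τ i).isLt
    have hvj := (τ j).isLt
    have hne : (τ i : ℕ) ≠ (τ j : ℕ) := by
      intro e
      have := τ.injective (Fin.ext e)
      rw [Fin.ext_iff] at this
      omega
    by_cases hia : (τ i : ℕ) = a
    · have hj1 : (j : ℕ) = 1 := by have := pos_a i hia; omega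
      have hjb : (τ j : ℕ) = b := val1 j hj1
      rw [hia, hjb]
      unfold gmap
      split_ifs <;> omega
    · by_cases hja : (τ j : ℕ) = a
      · have := pos_a j hja; omega
      · unfold gmap
        split_ifs <;> omega
  · apply peaks_congr
    intro i j hj
    rw [Fin.lt_def, Fin.lt_def, hρapp, hρapp]
    have hvi := (τ i).isLt
    have hvj := (τ j).isLt
    have hne : (τ i : ℕ) ≠ (τ j : ℕ) := by
      intro e
      have := τ.injective (Fin.ext e)
      rw [Fin.ext_iff] at this
      omega
    by_cases hia : (τ i : ℕ) = a
    · have hj1 : (j : ℕ) = 1 := by have := pos_a i hia; omega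
      have hjb : (τ j : ℕ) = b := val1 j hj1
      rw [hia, hjb]
      unfold hmap
      split_ifs <;> omega
    · by_cases hja : (τ j : ℕ) = a
      · have := pos_a j hja; omega
      · by_cases hib : (τ i : ℕ) = b
        · have hj2 : (j : ℕ) = 2 := by have := pos_b i hib; omega
          have hjc : (τ j : ℕ) = c := val2 j hj2
          have hca : c ≠ a := by
            intro e
            have := pos_a j (by rw [hjc]; exact e)
            omega
          rw [hib, hjc]
          unfold hmap
          split_ifs <;> omega
        · by_cases hjb : (τ j : ℕ) = b
          · have hi0 : (i : ℕ) = 0 := by have := pos_b j hjb; omega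
            have : i = ⟨2-2, g1⟩ := Fin.ext (by simp only [Fin.val_mk]; omega)
            rw [this, hA] at hia
            exact absurd rfl hia
          · unfold hmap
            split_ifs <;> omega
  · rw [hσapp]
    have e0 : (τ (⟨0, by omega⟩ : Fin n) : ℕ) = a := by
      rw [← hA]
    rw [e0]
    unfold gmap
    simp
  · rw [hρapp]
    have e0 : (τ (⟨0, by omega⟩ : Fin n) : ℕ) = a := by
      rw [← hA]
    rw [e0]
    unfold hmap
    simp
/-- if `2 ∈ S` and `n-1 ∈ S`, the maximum ℓ∞ distance on
`P(S;n)` is `n - 2`. -/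
theorem max_linf_on_peak_class_ends (n : ℕ) (hn : 2 ≤ n) (S : Finset ℕ)
    (hS : ∃ σ : Equiv.Perm (Fin n), peaks n σ = S)
    (h2 : 2 ∈ S) (hn1 : n - 1 ∈ S) :
    IsGreatest {d | ∃ σ ρ : Equiv.Perm (Fin n),
        peaks n σ = S ∧ peaks n ρ = S ∧ d = dL n σ ρ} (n - 2) := by
  obtain ⟨τ, hτ⟩ := hS
  have h2τ : 2 ∈ peaks n τ := by rw [hτ]; exact h2
  have hn3 : 3 ≤ n := by
    obtain ⟨h1, hle, _⟩ := peaks_elim h2τ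
    omega
  constructor
  · obtain ⟨σ, ρ, hpσ, hpρ, hσ0, hρ0⟩ := exists_attain n hn3 τ h2τ
    refine ⟨σ, ρ, by rw [hpσ, hτ], by rw [hpρ, hτ], ?_⟩
    have hle : dL n σ ρ ≤ n - 2 :=
      dL_le n hn3 S h2 hn1 σ ρ (by rw [hpσ, hτ]) (by rw [hpρ, hτ])
    have hge : n - 2 ≤ dL n σ ρ := by
      have hmem := Finset.mem_univ (⟨0, by omega⟩ : Fin n)
      have hsup := Finset.le_sup
        (f := fun i => (((σ i : ℕ) : ℤ) - ((ρ i : ℕ) : ℤ)).natAbs) hmem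
      refine le_trans ?_ hsup
      show n - 2 ≤ (((σ ⟨0, by omega⟩ : ℕ) : ℤ) - ((ρ ⟨0, by omega⟩ : ℕ) : ℤ)).natAbs
      rw [hσ0, hρ0]
      omega
    omega
  · rintro d ⟨σ, ρ, hσ, hρ, rfl⟩
    exact dL_le n hn3 S h2 hn1 σ ρ hσ hρ
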